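/- Fiber contraction principle with continuity: Let B be a topological space, S a Banach space, h: B → B a map, and F: B × S → S a map such that for some 0 ≤ K < 1 one has ‖F(b,e) − F(b,e')‖ ≤ K‖e − e'‖ for all b ∈ B and e, e' ∈ S, and such that sup over b ∈ B of ‖F(b,0)‖ is finite. Then there is exactly one bounded map s: B → S satisfying s(b) = F(b, s(h(b))) for all b ∈ B. If moreover h and F are continuous, then s is continuous. -/

import Mathlib

open BoundedContinuousFunction in
theorem fiber_contraction_aux
    {B : Type*}
    {S : Type*} [NormedAddCommGroup S] [NormedSpace ℝ S] [CompleteSpace S]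
    (h : B → B) (F : B → S → S)
    (K : ℝ) (hK0 : 0 ≤ K) (hK1 : K < 1)
    (hLip : ∀ (b : B) (e e' : S), ‖F b e - F b e'‖ ≤ K * ‖e - e'‖)
    (hbdd : ∃ M : ℝ, ∀ b : B, ‖F b 0‖ ≤ M) :
    ∃! s : B → S, (∃ M : ℝ, ∀ b : B, ‖s b‖ ≤ M) ∧ ∀ b : B, s b = F b (s (h b)) := by
  letI : TopologicalSpace B := ⊥
  haveI : DiscreteTopology B := ⟨rfl⟩
  obtain ⟨M, hM⟩ := hbdd
  set T : (B →ᵇ S) → (B →ᵇ S) := fun f =>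
    ofNormedAddCommGroup (fun b => F b (f (h b))) continuous_of_discreteTopology
      (M + K * ‖f‖) (by
        intro b
        calc ‖F b (f (h b))‖ = ‖(F b (f (h b)) - F b 0) + F b 0‖ := by rw [sub_add_cancel]
          _ ≤ ‖F b (f (h b)) - F b 0‖ + ‖F b 0‖ := norm_add_le _ _
          _ ≤ K * ‖f (h b) - 0‖ + M := add_le_add (hLip b _ 0) (hM b)
          _ ≤ K * ‖f‖ + M := by
              refine add_le_add_left (mul_le_mul_of_nonneg_left ?_ hK0) M
              simpa using f.norm_coe_le_norm (h b)
          _ = M + K * ‖f‖ := by ring) with hTdef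
  have hT : ContractingWith ⟨K, hK0⟩ T := by
    constructor
    · exact_mod_cast hK1
    · apply LipschitzWith.of_dist_le_mul
      intro f g
      refine BoundedContinuousFunction.dist_le (mul_nonneg hK0 dist_nonneg) |>.2 ?_
      intro b
      have : dist (T f b) (T g b) ≤ K * dist (f (h b)) (g (h b)) := by
        simp only [dist_eq_norm]
        exact hLip b _ _
      exact this.trans (mul_le_mul_of_nonneg_left (dist_coe_le_dist (h b)) hK0)
  set s₀ := ContractingWith.fixedPoint T hT with hs₀
  have hfix : T s₀ = s₀ := hT.fixedPoint_isFixedPt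
  refine ⟨⇑s₀, ⟨⟨‖s₀‖, fun b => s₀.norm_coe_le_norm b⟩, fun b => ?_⟩, ?_⟩
  · conv_lhs => rw [← hfix]
    rfl
  · rintro s ⟨⟨M', hM'⟩, hs⟩
    set g : B →ᵇ S :=
      ofNormedAddCommGroup s continuous_of_discreteTopology M' hM' with hg
    have hfixg : T g = g := by
      ext b
      exact (hs b).symm
    have : g = s₀ := hT.fixedPoint_unique hfixg
    funext b
    calc s b = g b := rfl
      _ = s₀ b := by rw [this]

/-- Fiber contraction principle with continuity: a fiber contraction over an
arbitrary base has a unique bounded invariant section, which is continuous when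
the data are continuous. -/
theorem fiber_contraction_principle
    {B : Type*} [TopologicalSpace B]
    {S : Type*} [NormedAddCommGroup S] [NormedSpace ℝ S] [CompleteSpace S]
    (h : B → B) (F : B → S → S)
    (K : ℝ) (hK0 : 0 ≤ K) (hK1 : K < 1)
    (hLip : ∀ (b : B) (e e' : S), ‖F b e - F b e'‖ ≤ K * ‖e - e'‖)
    (hbdd : ∃ M : ℝ, ∀ b : B, ‖F b 0‖ ≤ M) :
    (∃! s : B → S, (∃ M : ℝ, ∀ b : B, ‖s b‖ ≤ M) ∧ ∀ b : B, s b = F b (s (h b))) ∧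
    (Continuous h → Continuous (fun z : B × S => F z.1 z.2) →
      ∀ s : B → S, (∃ M : ℝ, ∀ b : B, ‖s b‖ ≤ M) → (∀ b : B, s b = F b (s (h b))) →
        Continuous s) := by
  constructor
  · exact fiber_contraction_aux h F K hK0 hK1 hLip hbdd
  · rintro hh hF s ⟨M, hM⟩ hs
    set M' : ℝ := max M 0 with hM'def
    have hM' : ∀ b, ‖s b‖ ≤ M' := fun b => (hM b).trans (le_max_left _ _)
    set seq : ℕ → B → S := fun n => (fun (f : B → S) b => F b (f (h b)))^[n] (fun _ => (0:S))
      with hseq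
    have hseq0 : seq 0 = fun _ => (0:S) := rfl
    have hseqsucc : ∀ n, seq (n+1) = fun b => F b (seq n (h b)) := by
      intro n
      simp only [hseq, Function.iterate_succ_apply']
    have hseqcont : ∀ n, Continuous (seq n) := by
      intro n
      induction n with
      | zero => rw [hseq0]; exact continuous_const
      | succ n ih =>
        rw [hseqsucc n]
        exact hF.comp (continuous_id.prodMk (ih.comp hh))
    have hbound : ∀ n b, ‖seq n b - s b‖ ≤ K ^ n * M' := by
      intro n
      induction n with
      | zero => intro b; simpa [hseq0] using hM' b
      | succ n ih =>
        intro b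
        rw [hseqsucc n]
        calc ‖F b (seq n (h b)) - s b‖ = ‖F b (seq n (h b)) - F b (s (h b))‖ := by
              rw [← hs b]
          _ ≤ K * ‖seq n (h b) - s (h b)‖ := hLip b _ _
          _ ≤ K * (K ^ n * M') := mul_le_mul_of_nonneg_left (ih (h b)) hK0
          _ = K ^ (n+1) * M' := by ring
    have htend : Filter.Tendsto (fun n => K ^ n * M') Filter.atTop (nhds 0) := by
      have := (tendsto_pow_atTop_nhds_zero_of_lt_one hK0 hK1).mul_const M'
      simpa using this
    have hTU : TendstoUniformly seq s Filter.atTop := by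
      rw [Metric.tendstoUniformly_iff]
      intro ε hε
      filter_upwards [htend.eventually (gt_mem_nhds hε)] with n hn b
      calc dist (s b) (seq n b) = ‖seq n b - s b‖ := by rw [dist_comm, dist_eq_norm]
        _ ≤ K ^ n * M' := hbound n b
        _ < ε := hn
    exact hTU.continuous (Filter.Eventually.of_forall hseqcont).frequently
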